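/- Let q be a prime power and u, v ∈ D_q. Then Ẽ(u) ∩ Ẽ(v) = ∅ if and only if there exist an element α ∈ 𝔽_q with α³ = 1 and α ≠ 1, and nonzero scalars λ, μ ∈ 𝔽_q*, such that u = λ·(1, α, α²) and v = μ·(1, α², α). -/

import Mathlib

open Set Pointwise

variable {F : Type*} [Field F]

/-- Hamming distance on `𝔽_q³`. -/
noncomputable def hdist (u v : Fin 3 → F) : ℕ := Set.ncard {i : Fin 3 | u i ≠ v i}

/-- The ball of radius 1 centered at `u`. -/
def ball (u : Fin 3 → F) : Set (Fin 3 → F) := {v | hdist u v ≤ 1}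

/-- The extended ball of `u`: the union of the balls centered at scalar multiples of `u`. -/
def extBall (u : Fin 3 → F) : Set (Fin 3 → F) := ⋃ l : F, ball (l • u)

/-- `D_q`: vectors with pairwise distinct, nonzero coordinates. -/
def Dq : Set (Fin 3 → F) :=
  {u | u 0 ≠ u 1 ∧ u 0 ≠ u 2 ∧ u 1 ≠ u 2 ∧ u 0 ≠ 0 ∧ u 1 ≠ 0 ∧ u 2 ≠ 0}

/-- `B̃(u) = B(u) ∩ D_q`. -/
def ballD (u : Fin 3 → F) : Set (Fin 3 → F) := ball u ∩ Dq

/-- `Ẽ(u) = E(u) ∩ D_q`. -/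
def extBallD (u : Fin 3 → F) : Set (Fin 3 → F) := extBall u ∩ Dq

/-- `H` is a short covering if the extended balls centered at its elements cover the space. -/
def ShortCovering (H : Set (Fin 3 → F)) : Prop := (⋃ h ∈ H, extBall h) = Set.univ

lemma hdist_le_one_iff (u v : Fin 3 → F) :
    hdist u v ≤ 1 ↔ (u 0 = v 0 ∧ u 1 = v 1) ∨ (u 0 = v 0 ∧ u 2 = v 2) ∨ (u 1 = v 1 ∧ u 2 = v 2) := by
  classical
  have hfin : {i : Fin 3 | u i ≠ v i}.Finite := Set.toFinite _
  constructor
  · intro h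
    by_contra hc
    push_neg at hc
    obtain ⟨h01, h02, h12⟩ := hc
    have key : ∀ a b : Fin 3, a ≠ b → u a ≠ v a → u b ≠ v b → False := by
      intro a b hab ha hb
      have hsub : ({a, b} : Set (Fin 3)) ⊆ {i | u i ≠ v i} := by
        intro i hi; rcases hi with rfl | hi
        · exact ha
        · rw [Set.mem_singleton_iff] at hi; subst hi; exact hb
      have h2 := Set.ncard_le_ncard hsub hfin
      rw [Set.ncard_pair hab] at h2
      have : hdist u v = Set.ncard {i : Fin 3 | u i ≠ v i} := rfl
      omega
    by_cases h0 : u 0 = v 0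
    · exact key 1 2 (by decide) (h01 h0) (h02 h0)
    · by_cases h1 : u 1 = v 1
      · exact key 0 2 (by decide) h0 (h12 h1)
      · exact key 0 1 (by decide) h0 h1
  · intro h
    have key : ∀ k : Fin 3, (∀ i, i ≠ k → u i = v i) → hdist u v ≤ 1 := by
      intro k hk
      have hsub : {i : Fin 3 | u i ≠ v i} ⊆ {k} := by
        intro i hi
        by_contra hik
        exact hi (hk i (by simpa using hik))
      calc hdist u v ≤ Set.ncard ({k} : Set (Fin 3)) :=
            Set.ncard_le_ncard hsub (Set.finite_singleton k)
        _ = 1 := Set.ncard_singleton k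
    rcases h with ⟨h0, h1⟩ | ⟨h0, h2⟩ | ⟨h1, h2⟩
    · exact key 2 (by intro i hi; fin_cases i <;> simp_all)
    · exact key 1 (by intro i hi; fin_cases i <;> simp_all)
    · exact key 0 (by intro i hi; fin_cases i <;> simp_all)

lemma mem_extBall_of (u w : Fin 3 → F) (c : F)
    (h : (c * u 0 = w 0 ∧ c * u 1 = w 1) ∨ (c * u 0 = w 0 ∧ c * u 2 = w 2) ∨
      (c * u 1 = w 1 ∧ c * u 2 = w 2)) : w ∈ extBall u := by
  refine Set.mem_iUnion.2 ⟨c, ?_⟩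
  show hdist (c • u) w ≤ 1
  rw [hdist_le_one_iff]
  simpa [Pi.smul_apply, smul_eq_mul] using h

lemma extBall_cases {u w : Fin 3 → F} (h : w ∈ extBall u) :
    ∃ c : F, (c * u 0 = w 0 ∧ c * u 1 = w 1) ∨ (c * u 0 = w 0 ∧ c * u 2 = w 2) ∨
      (c * u 1 = w 1 ∧ c * u 2 = w 2) := by
  obtain ⟨c, hc⟩ := Set.mem_iUnion.1 h
  refine ⟨c, ?_⟩
  have : hdist (c • u) w ≤ 1 := hc
  rw [hdist_le_one_iff] at this
  simpa [Pi.smul_apply, smul_eq_mul] using this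

lemma mem_Dq (a b c : F) (h01 : a ≠ b) (h02 : a ≠ c) (h12 : b ≠ c)
    (h0 : a ≠ 0) (h1 : b ≠ 0) (h2 : c ≠ 0) : ![a,b,c] ∈ (Dq : Set (Fin 3 → F)) := by
  refine ⟨?_, ?_, ?_, ?_, ?_, ?_⟩ <;> simp <;> assumption

set_option maxHeartbeats 1000000 in
theorem stmt_13 (q : ℕ) (hq : IsPrimePow q) (F : Type*) [Field F] [Fintype F]
    (hcard : Fintype.card F = q) (u v : Fin 3 → F)
    (hu : u ∈ (Dq : Set (Fin 3 → F))) (hv : v ∈ (Dq : Set (Fin 3 → F))) :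
    extBallD u ∩ extBallD v = ∅ ↔
      ∃ α : F, α ^ 3 = 1 ∧ α ≠ 1 ∧ ∃ l m : F, l ≠ 0 ∧ m ≠ 0 ∧
        u = l • ![1, α, α ^ 2] ∧ v = m • ![1, α ^ 2, α] := by
  constructor
  · intro h
    obtain ⟨hu01, hu02, hu12, hu0, hu1, hu2⟩ := hu
    obtain ⟨hv01, hv02, hv12, hv0, hv1, hv2⟩ := hv
    have hit : ∀ w : Fin 3 → F, w ∉ extBallD u ∩ extBallD v :=
      Set.eq_empty_iff_forall_notMem.mp h
    have eqA : u 1 * v 0 = u 0 * v 2 := by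
      by_contra hne
      exact hit ![v 0 * u 0, v 0 * u 1, u 0 * v 2]
        ⟨⟨mem_extBall_of u _ (v 0) (Or.inl ⟨by simp, by simp⟩),
          mem_Dq _ _ _ (fun h => hu01 (mul_left_cancel₀ hv0 h))
            (fun h => hv02 (mul_left_cancel₀ hu0 (by linear_combination h)))
            (fun h => hne (by linear_combination h))
            (mul_ne_zero hv0 hu0) (mul_ne_zero hv0 hu1) (mul_ne_zero hu0 hv2)⟩,
         ⟨mem_extBall_of v _ (u 0) (Or.inr (Or.inl ⟨by simp [mul_comm], by simp⟩)),
          mem_Dq _ _ _ (fun h => hu01 (mul_left_cancel₀ hv0 h))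
            (fun h => hv02 (mul_left_cancel₀ hu0 (by linear_combination h)))
            (fun h => hne (by linear_combination h))
            (mul_ne_zero hv0 hu0) (mul_ne_zero hv0 hu1) (mul_ne_zero hu0 hv2)⟩⟩
    have eqB : u 2 * v 0 = u 0 * v 1 := by
      by_contra hne
      exact hit ![v 0 * u 0, u 0 * v 1, v 0 * u 2]
        ⟨⟨mem_extBall_of u _ (v 0) (Or.inr (Or.inl ⟨by simp, by simp⟩)),
          mem_Dq _ _ _ (fun h => hv01 (mul_left_cancel₀ hu0 (by linear_combination h)))
            (fun h => hu02 (mul_left_cancel₀ hv0 h))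
            (fun h => hne (by linear_combination -h))
            (mul_ne_zero hv0 hu0) (mul_ne_zero hu0 hv1) (mul_ne_zero hv0 hu2)⟩,
         ⟨mem_extBall_of v _ (u 0) (Or.inl ⟨by simp [mul_comm], by simp⟩),
          mem_Dq _ _ _ (fun h => hv01 (mul_left_cancel₀ hu0 (by linear_combination h)))
            (fun h => hu02 (mul_left_cancel₀ hv0 h))
            (fun h => hne (by linear_combination -h))
            (mul_ne_zero hv0 hu0) (mul_ne_zero hu0 hv1) (mul_ne_zero hv0 hu2)⟩⟩
    have eqC : u 0 * v 1 = u 1 * v 2 := by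
      by_contra hne
      exact hit ![v 1 * u 0, v 1 * u 1, u 1 * v 2]
        ⟨⟨mem_extBall_of u _ (v 1) (Or.inl ⟨by simp, by simp⟩),
          mem_Dq _ _ _ (fun h => hu01 (mul_left_cancel₀ hv1 h))
            (fun h => hne (by linear_combination h))
            (fun h => hv12 (mul_left_cancel₀ hu1 (by linear_combination h)))
            (mul_ne_zero hv1 hu0) (mul_ne_zero hv1 hu1) (mul_ne_zero hu1 hv2)⟩,
         ⟨mem_extBall_of v _ (u 1) (Or.inr (Or.inr ⟨by simp [mul_comm], by simp⟩)),
          mem_Dq _ _ _ (fun h => hu01 (mul_left_cancel₀ hv1 h))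
            (fun h => hne (by linear_combination h))
            (fun h => hv12 (mul_left_cancel₀ hu1 (by linear_combination h)))
            (mul_ne_zero hv1 hu0) (mul_ne_zero hv1 hu1) (mul_ne_zero hu1 hv2)⟩⟩
    have eqD : u 2 * v 1 = u 1 * v 0 := by
      by_contra hne
      exact hit ![u 1 * v 0, v 1 * u 1, v 1 * u 2]
        ⟨⟨mem_extBall_of u _ (v 1) (Or.inr (Or.inr ⟨by simp [mul_comm], by simp⟩)),
          mem_Dq _ _ _ (fun h => hv01 (mul_left_cancel₀ hu1 (by linear_combination h)))
            (fun h => hne (by linear_combination -h))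
            (fun h => hu12 (mul_left_cancel₀ hv1 h))
            (mul_ne_zero hu1 hv0) (mul_ne_zero hv1 hu1) (mul_ne_zero hv1 hu2)⟩,
         ⟨mem_extBall_of v _ (u 1) (Or.inl ⟨by simp, by simp [mul_comm]⟩),
          mem_Dq _ _ _ (fun h => hv01 (mul_left_cancel₀ hu1 (by linear_combination h)))
            (fun h => hne (by linear_combination -h))
            (fun h => hu12 (mul_left_cancel₀ hv1 h))
            (mul_ne_zero hu1 hv0) (mul_ne_zero hv1 hu1) (mul_ne_zero hv1 hu2)⟩⟩
    -- algebra
    have hE : u 2 * u 0 = u 1 ^ 2 := by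
      apply mul_left_cancel₀ hv0
      linear_combination u 0 * eqB + u 0 * eqC - u 1 * eqA
    have hF : u 2 ^ 2 = u 1 * u 0 := by
      apply mul_left_cancel₀ hv0
      linear_combination u 2 * eqB + u 0 * eqD
    have hG : u 1 ^ 3 = u 0 ^ 3 := by
      apply mul_left_cancel₀ hu1
      linear_combination u 0 ^ 2 * hF - (u 2 * u 0 + u 1 ^ 2) * hE
    refine ⟨u 1 * (u 0)⁻¹, ?_, ?_, u 0, v 0, hu0, hv0, ?_, ?_⟩
    · field_simp
      exact hG
    · intro h
      apply hu01
      field_simp at h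
      exact h.symm
    · funext i
      fin_cases i <;> simp [Pi.smul_apply, smul_eq_mul]
      · field_simp
      · field_simp
        linear_combination hE
    · funext i
      fin_cases i <;> simp [Pi.smul_apply, smul_eq_mul]
      · field_simp
        linear_combination v 0 * hE - u 0 * eqB
      · field_simp
        linear_combination -eqA
  · intro hx
    obtain ⟨α, hα3, hα1, l, m, hl, hm, rfl, rfl⟩ := hx
    have hα0 : α ≠ 0 := by
      intro h; rw [h] at hα3; simp at hα3
    rw [Set.eq_empty_iff_forall_notMem]
    rintro w ⟨⟨hwU, hw01, hw02, hw12, hwz0, hwz1, hwz2⟩, hwV, -⟩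
    obtain ⟨c, hc⟩ := extBall_cases hwU
    obtain ⟨d, hd⟩ := extBall_cases hwV
    simp only [Pi.smul_apply, smul_eq_mul, Matrix.cons_val_zero, Matrix.cons_val_one,
      Matrix.head_cons, Matrix.cons_val_two, Matrix.tail_cons] at hc hd
    rcases hc with ⟨h1, h2⟩ | ⟨h1, h2⟩ | ⟨h1, h2⟩ <;>
      rcases hd with ⟨g1, g2⟩ | ⟨g1, g2⟩ | ⟨g1, g2⟩
    · -- P01 Q01 → α = 1
      have he : c * l ≠ 0 := fun h0 => hwz0 (by linear_combination h0 - h1)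
      have h' : (c * l) * α = (c * l) * (α * α) := by
        linear_combination h2 - g2 + α^2 * g1 - α^2 * h1
      have h'' : α * 1 = α * α := by linear_combination mul_left_cancel₀ he h'
      exact hα1 (mul_left_cancel₀ hα0 h'').symm
    · -- P01 Q02 → w 1 = w 2
      exact hw12 (by linear_combination -h2 + g2 + α * h1 - α * g1)
    · -- P01 Q12 → w 0 = w 2
      exact hw02 (by linear_combination -h1 + g2 + α^2 * h2 - α^2 * g1 + (d*m*α - c*l) * hα3)
    · -- P02 Q01 → w 1 = w 2
      exact hw12 (by linear_combination h2 - g2 - α^2 * h1 + α^2 * g1)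
    · -- P02 Q02 → α = 1
      have he : c * l ≠ 0 := fun h0 => hwz0 (by linear_combination h0 - h1)
      have h' : (c * l) * α = (c * l) * (α * α) := by
        linear_combination g2 - h2 + α * h1 - α * g1
      have h'' : α * 1 = α * α := by linear_combination mul_left_cancel₀ he h'
      exact hα1 (mul_left_cancel₀ hα0 h'').symm
    · -- P02 Q12 → w 0 = w 1
      exact hw01 (by linear_combination -h1 + g1 + α * h2 - α * g2 - (c*l) * hα3)
    · -- P12 Q01 → w 0 = w 2
      exact hw02 (by linear_combination -g1 + h2 + α * g2 - α * h1 - (d*m) * hα3)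
    · -- P12 Q02 → w 0 = w 1
      exact hw01 (by linear_combination -g1 + h1 + α^2 * g2 - α^2 * h2 + (c*l*α - d*m) * hα3)
    · -- P12 Q12 → α = 1
      have hf : d * m ≠ 0 := fun h0 => hwz1 (by linear_combination α^2 * h0 - g1)
      have h' : (d * m) * 1 = (d * m) * α := by
        linear_combination α * g1 - α * h1 + h2 - g2 - (d*m) * hα3
      exact hα1 (mul_left_cancel₀ hf h').symm
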